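/- arXiv:2605.22972 — 2 statements merged into one kernel-verified Lean document; each statement's English description precedes it below -/
import Mathlib

section
/- Under the TI-with-exceptions kernel ridge regression setup, for every ordered pair (j,k) of distinct indices in {1,…,n} that does not belong to the training index set T, the model prediction satisfies f(j,k) = r_j − r_k, where r_j := δ_o(b̄_j − b̄_{j−1}) + δ_o·h̄·([j = p] − [j = q]). -/
open Real Matrix Finset

noncomputable section

namespace TIExc

/-- Real inverse hyperbolic cosine. -/
def arcosh (x : ℝ) : ℝ := Real.log (x + Real.sqrt (x ^ 2 - 1))

/-- Training index set: adjacent pairs in both orders plus the exception pair in both orders. -/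
def T (n p q : ℕ) : Finset (ℕ × ℕ) :=
  ((Finset.Icc 1 (n - 1)).image fun j => (j, j + 1)) ∪
    ((Finset.Icc 1 (n - 1)).image fun j => (j + 1, j)) ∪ {(p, q), (q, p)}

/-- Exchangeable kernel on ordered pairs of items. -/
def ker (κs κo κd : ℝ) (u u' : ℕ × ℕ) : ℝ :=
  if u = u' then κs else if u.1 = u'.1 ∨ u.2 = u'.2 then κo else κd

/-- Training labels. -/
def lab (p q : ℕ) (u : ℕ × ℕ) : ℝ :=
  if u = (p, q) then 1 else if u = (q, p) then -1 else if u.1 < u.2 then 1 else -1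

/-- The training-set kernel matrix. -/
def Kmat (n p q : ℕ) (κs κo κd : ℝ) : Matrix ↥(T n p q) ↥(T n p q) ℝ :=
  fun u u' => ker κs κo κd u.1 u'.1

/-- Dual coefficients `a = (K + c⁻¹ I)⁻¹ y`. -/
def dual (n p q : ℕ) (κs κo κd c : ℝ) : ↥(T n p q) → ℝ :=
  (Kmat n p q κs κo κd + c⁻¹ • (1 : Matrix ↥(T n p q) ↥(T n p q) ℝ))⁻¹ *ᵥ
    fun u => lab p q u.1

/-- Dual coefficient at an ordered pair (`0` off the training set). -/
def aAt (n p q : ℕ) (κs κo κd c : ℝ) (u : ℕ × ℕ) : ℝ :=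
  if h : u ∈ T n p q then dual n p q κs κo κd c ⟨u, h⟩ else 0

/-- `b̄ⱼ = a₍ⱼ,ⱼ₊₁₎`, with the convention `b̄₀ = b̄ₙ = 0`. -/
def bbar (n p q : ℕ) (κs κo κd c : ℝ) (j : ℕ) : ℝ :=
  aAt n p q κs κo κd c (j, j + 1)

/-- `h̄ = a₍ₚ,q₎`. -/
def hbar (n p q : ℕ) (κs κo κd c : ℝ) : ℝ :=
  aAt n p q κs κo κd c (p, q)

/-- Model prediction `f(u) = ∑_{u' ∈ T} κ(u,u') a_{u'}`. -/
def pred (n p q : ℕ) (κs κo κd c : ℝ) (u : ℕ × ℕ) : ℝ :=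
  ∑ u' : ↥(T n p q), ker κs κo κd u u'.1 * dual n p q κs κo κd c u'

/-- Emergent rank `rⱼ = δₒ(b̄ⱼ − b̄ⱼ₋₁) + δₒ h̄ ([j = p] − [j = q])`. -/
def rank (n p q : ℕ) (κs κo κd c : ℝ) (j : ℕ) : ℝ :=
  (κo - κd) * (bbar n p q κs κo κd c j - bbar n p q κs κo κd c (j - 1)) +
    (κo - κd) * hbar n p q κs κo κd c *
      ((if j = p then 1 else 0) - (if j = q then 1 else 0))

/-- `λ = arccosh((1 + c̃⁻¹)/(1 − α))`. -/
def lam (α ctil : ℝ) : ℝ := arcosh ((1 + ctil⁻¹) / (1 - α))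

/-- The no-exception TI rank `r_j^TI`. -/
def rTI (n : ℕ) (l : ℝ) (j : ℕ) : ℝ :=
  Real.sinh ((((n : ℝ) + 1) / 2 - (j : ℝ)) * l) /
    (Real.sinh (((n : ℝ) + 1) / 2 * l) - Real.sinh (((n : ℝ) - 1) / 2 * l))

/-- `D̃ᵢⱼ = cosh((min(i,j) − 1/2)λ)·cosh((n − max(i,j) + 1/2)λ)`. -/
def Dtil (n : ℕ) (l : ℝ) (i j : ℕ) : ℝ :=
  Real.cosh (((min i j : ℕ) - (1 : ℝ) / 2) * l) *
    Real.cosh (((n : ℝ) - (max i j : ℕ) + 1 / 2) * l)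

/-- The quantity `G`. -/
def Gq (n p q : ℕ) (l : ℝ) : ℝ :=
  Real.cosh (((q : ℝ) - 1 / 2) * l) *
      Real.sinh (((n : ℝ) - ((p : ℝ) + (q : ℝ) - 1) / 2) * l) +
    Real.cosh (((n : ℝ) - (p : ℝ) + 1 / 2) * l) *
      Real.sinh ((((p : ℝ) + (q : ℝ) - 1) / 2) * l)

lemma mem_T_iff {n p q : ℕ} {u : ℕ × ℕ} :
    u ∈ T n p q ↔ (∃ m, (1 ≤ m ∧ m ≤ n - 1) ∧ (m, m + 1) = u) ∨
      (∃ m, (1 ≤ m ∧ m ≤ n - 1) ∧ (m + 1, m) = u) ∨ u = (p, q) ∨ u = (q, p) := by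
  simp only [T, Finset.mem_union, Finset.mem_image, Finset.mem_Icc, Finset.mem_insert,
    Finset.mem_singleton]
  aesop

lemma swap_mem_T {n p q : ℕ} {u : ℕ × ℕ} (h : u ∈ T n p q) : u.swap ∈ T n p q := by
  rw [mem_T_iff] at h ⊢
  rcases h with ⟨m, hm, rfl⟩ | ⟨m, hm, rfl⟩ | rfl | rfl
  · exact Or.inr (Or.inl ⟨m, hm, rfl⟩)
  · exact Or.inl ⟨m, hm, rfl⟩
  · exact Or.inr (Or.inr (Or.inr rfl))
  · exact Or.inr (Or.inr (Or.inl rfl))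

lemma ne_of_mem_T {n p q : ℕ} (hqp : q < p) {u : ℕ × ℕ} (h : u ∈ T n p q) : u.1 ≠ u.2 := by
  rw [mem_T_iff] at h
  rcases h with ⟨m, hm, rfl⟩ | ⟨m, hm, rfl⟩ | rfl | rfl <;> simp <;> omega

def sw (n p q : ℕ) : ↥(T n p q) ≃ ↥(T n p q) where
  toFun u := ⟨u.1.swap, swap_mem_T u.2⟩
  invFun u := ⟨u.1.swap, swap_mem_T u.2⟩
  left_inv u := by simp
  right_inv u := by simp

lemma ker_swap (κs κo κd : ℝ) (u v : ℕ × ℕ) :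
    ker κs κo κd u.swap v.swap = ker κs κo κd u v := by
  unfold ker
  rcases eq_or_ne u v with rfl | h
  · simp
  · rw [if_neg (fun hc => h (Prod.swap_injective hc)), if_neg h, Prod.fst_swap, Prod.fst_swap,
      Prod.snd_swap, Prod.snd_swap]
    exact if_congr or_comm rfl rfl

lemma lab_swap {p q : ℕ} (hqp : q < p) {u : ℕ × ℕ} (hne : u.1 ≠ u.2) :
    lab p q u.swap = - lab p q u := by
  obtain ⟨x, y⟩ := u
  simp only at hne
  unfold lab
  simp only [Prod.swap_prod_mk, Prod.mk.injEq]
  split_ifs <;> (try norm_num) <;> (try simp only [not_and_or] at *) <;> omega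

lemma dual_swap (n p q : ℕ) (κs κo κd c : ℝ) (hqp : q < p) (u : ↥(T n p q)) :
    dual n p q κs κo κd c (sw n p q u) = - dual n p q κs κo κd c u := by
  set M := Kmat n p q κs κo κd + c⁻¹ • (1 : Matrix ↥(T n p q) ↥(T n p q) ℝ) with hM
  have hsub : M.submatrix (sw n p q) (sw n p q) = M := by
    ext a b
    simp only [Matrix.submatrix_apply, hM, Matrix.add_apply, Matrix.smul_apply, Kmat]
    congr 1
    · exact ker_swap κs κo κd a.1 b.1
    · have : ((sw n p q a = sw n p q b) ↔ (a = b)) := (sw n p q).injective.eq_iff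
      by_cases hab : a = b
      · rw [hab, Matrix.one_apply_eq, Matrix.one_apply_eq]
      · rw [Matrix.one_apply_ne (fun hc => hab (this.mp hc)), Matrix.one_apply_ne hab]
  have hinv : M⁻¹.submatrix (sw n p q) (sw n p q) = M⁻¹ := by
    conv_rhs => rw [← hsub]
    rw [Matrix.inv_submatrix_equiv]
  unfold dual
  rw [← hM]
  show (M⁻¹ *ᵥ fun v => lab p q v.1) (sw n p q u) = -(M⁻¹ *ᵥ fun v => lab p q v.1) u
  simp only [Matrix.mulVec, dotProduct]
  rw [← Equiv.sum_comp (sw n p q) (fun v => M⁻¹ (sw n p q u) v * lab p q v.1)]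
  rw [← Finset.sum_neg_distrib]
  refine Finset.sum_congr rfl fun v _ => ?_
  have h1 : M⁻¹ (sw n p q u) (sw n p q v) = M⁻¹ u v := congrFun (congrFun hinv u) v
  have h2 : lab p q (((sw n p q v) : ℕ × ℕ)) = - lab p q ((v : ℕ × ℕ)) :=
    lab_swap hqp (ne_of_mem_T hqp v.2)
  rw [h1, h2]; ring

lemma aAt_swap (n p q : ℕ) (κs κo κd c : ℝ) (hqp : q < p) (u : ℕ × ℕ) :
    aAt n p q κs κo κd c u.swap = - aAt n p q κs κo κd c u := by
  by_cases h : u ∈ T n p q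
  · rw [aAt, dif_pos (swap_mem_T h), aAt, dif_pos h]
    exact dual_swap n p q κs κo κd c hqp ⟨u, h⟩
  · have h' : u.swap ∉ T n p q := fun hc => h (by simpa using swap_mem_T hc)
    rw [aAt, dif_neg h', aAt, dif_neg h, neg_zero]

lemma bbar_zero (n p q : ℕ) (κs κo κd c : ℝ) (hqp : q < p) (hgap : 2 ≤ p - q) (x : ℕ)
    (hx : ¬(1 ≤ x ∧ x ≤ n - 1)) : bbar n p q κs κo κd c x = 0 := by
  have hnot : (x, x + 1) ∉ T n p q := by
    rw [mem_T_iff]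
    rintro (⟨m, hm, e⟩ | ⟨m, hm, e⟩ | e | e) <;> simp only [Prod.mk.injEq] at e <;> omega
  rw [bbar, aAt, dif_neg hnot]

lemma sum_T (n p q : ℕ) (hqp : q < p) (hgap : 2 ≤ p - q) (g : ℕ × ℕ → ℝ) :
    ∑ u ∈ T n p q, g u = (∑ m ∈ Finset.Icc 1 (n - 1), g (m, m + 1)) +
      (∑ m ∈ Finset.Icc 1 (n - 1), g (m + 1, m)) + g (p, q) + g (q, p) := by
  have hd1 : Disjoint ((Finset.Icc 1 (n - 1)).image fun m => (m, m + 1))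
      ((Finset.Icc 1 (n - 1)).image fun m => (m + 1, m)) := by
    rw [Finset.disjoint_left]
    rintro u hx hy
    simp only [Finset.mem_image, Finset.mem_Icc] at hx hy
    obtain ⟨m, hm, rfl⟩ := hx
    obtain ⟨m', hm', e⟩ := hy
    simp only [Prod.mk.injEq] at e
    omega
  have hd2 : Disjoint (((Finset.Icc 1 (n - 1)).image fun m => (m, m + 1)) ∪
      ((Finset.Icc 1 (n - 1)).image fun m => (m + 1, m)))
      ({(p, q), (q, p)} : Finset (ℕ × ℕ)) := by
    rw [Finset.disjoint_right]
    intro u hu hmem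
    simp only [Finset.mem_insert, Finset.mem_singleton] at hu
    simp only [Finset.mem_union, Finset.mem_image, Finset.mem_Icc] at hmem
    rcases hu with rfl | rfl <;> rcases hmem with ⟨m, hm, e⟩ | ⟨m, hm, e⟩ <;>
      simp only [Prod.mk.injEq] at e <;> omega
  have hinj1 : ∀ x ∈ Finset.Icc 1 (n - 1), ∀ y ∈ Finset.Icc 1 (n - 1),
      (x, x + 1) = (y, y + 1) → x = y := by
    intro x _ y _ h; simpa using (Prod.mk.injEq .. ▸ h).1
  have hinj2 : ∀ x ∈ Finset.Icc 1 (n - 1), ∀ y ∈ Finset.Icc 1 (n - 1),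
      (x + 1, x) = (y + 1, y) → x = y := by
    intro x _ y _ h; simpa using (Prod.mk.injEq .. ▸ h).2
  have hne : ((p, q) : ℕ × ℕ) ≠ (q, p) := by
    simp only [Ne, Prod.mk.injEq]; omega
  rw [T, Finset.sum_union hd2, Finset.sum_union hd1, Finset.sum_image hinj1,
    Finset.sum_image hinj2, Finset.sum_pair hne]
  ring


/-- On test pairs, the prediction decomposes as a difference of emergent ranks. -/
theorem test_prediction_is_rank_difference
    (n p q : ℕ) (κs κo κd c : ℝ)
    (hn : 3 ≤ n) (hq1 : 1 ≤ q) (hqp : q < p) (hpn : p ≤ n) (hgap : 2 ≤ p - q)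
    (hκd : 0 ≤ κd) (hκo : κd < κo) (hκs : 2 * (κo - κd) ≤ κs - κd) (hc : 0 < c) :
    ∀ j k : ℕ, 1 ≤ j → j ≤ n → 1 ≤ k → k ≤ n → j ≠ k → (j, k) ∉ T n p q →
      pred n p q κs κo κd c (j, k) =
        rank n p q κs κo κd c j - rank n p q κs κo κd c k := by
  intro j k hj1 hjn hk1 hkn hjk hu
  -- prediction as a sum over the finite set T
  have hpred : pred n p q κs κo κd c (j, k) =
      ∑ u' ∈ T n p q, ker κs κo κd (j, k) u' * aAt n p q κs κo κd c u' := by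
    rw [pred, ← Finset.sum_coe_sort (T n p q)
      (fun u' => ker κs κo κd (j, k) u' * aAt n p q κs κo κd c u')]
    refine Finset.sum_congr rfl fun u' _ => ?_
    rw [aAt, dif_pos u'.2]
  -- useful abbreviation facts
  have haArev : ∀ m : ℕ, aAt n p q κs κo κd c (m + 1, m) = - bbar n p q κs κo κd c m := by
    intro m
    rw [bbar]
    exact aAt_swap n p q κs κo κd c hqp (m, m + 1)
  have haQP : aAt n p q κs κo κd c (q, p) = - hbar n p q κs κo κd c := by
    rw [hbar]
    exact aAt_swap n p q κs κo κd c hqp (p, q)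
  have hbif : ∀ x : ℕ,
      (if x ∈ Finset.Icc 1 (n - 1) then bbar n p q κs κo κd c x else 0) =
        bbar n p q κs κo κd c x := by
    intro x
    by_cases hx : x ∈ Finset.Icc 1 (n - 1)
    · rw [if_pos hx]
    · rw [if_neg hx,
        bbar_zero n p q κs κo κd c hqp hgap x (by rwa [Finset.mem_Icc] at hx)]
  -- the first block of the sum
  have hA : ∑ m ∈ Finset.Icc 1 (n - 1),
      ker κs κo κd (j, k) (m, m + 1) * aAt n p q κs κo κd c (m, m + 1) =
      κd * (∑ m ∈ Finset.Icc 1 (n - 1), bbar n p q κs κo κd c m) +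
        ((κo - κd) * bbar n p q κs κo κd c j +
          (κo - κd) * bbar n p q κs κo κd c (k - 1)) := by
    have e1 : ∀ m ∈ Finset.Icc 1 (n - 1),
        ker κs κo κd (j, k) (m, m + 1) * aAt n p q κs κo κd c (m, m + 1) =
        κd * bbar n p q κs κo κd c m +
          ((κo - κd) * (if j = m then bbar n p q κs κo κd c m else 0) +
            (κo - κd) * (if k - 1 = m then bbar n p q κs κo κd c m else 0)) := by
      intro m hm
      rw [Finset.mem_Icc] at hm
      have hmem : (m, m + 1) ∈ T n p q := mem_T_iff.mpr (Or.inl ⟨m, hm, rfl⟩)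
      have hne : ((j, k) : ℕ × ℕ) ≠ (m, m + 1) := fun e => hu (e ▸ hmem)
      rw [show aAt n p q κs κo κd c (m, m + 1) = bbar n p q κs κo κd c m from rfl]
      rw [ker, if_neg hne]
      by_cases h1 : j = m <;> by_cases h2 : k = m + 1
      · exact absurd (by rw [h1, h2]) hne
      · rw [if_pos (Or.inl h1), if_pos h1, if_neg (by omega : ¬ k - 1 = m)]; ring
      · rw [if_pos (Or.inr h2), if_neg h1, if_pos (by omega : k - 1 = m)]; ring
      · rw [if_neg (fun hc => hc.elim h1 h2), if_neg h1, if_neg (by omega : ¬ k - 1 = m)]; ring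
    rw [Finset.sum_congr rfl e1, Finset.sum_add_distrib, Finset.sum_add_distrib,
      ← Finset.mul_sum, ← Finset.mul_sum, ← Finset.mul_sum,
      Finset.sum_ite_eq, Finset.sum_ite_eq, hbif j, hbif (k - 1)]
  -- the second block of the sum
  have hB : ∑ m ∈ Finset.Icc 1 (n - 1),
      ker κs κo κd (j, k) (m + 1, m) * aAt n p q κs κo κd c (m + 1, m) =
      -(κd * (∑ m ∈ Finset.Icc 1 (n - 1), bbar n p q κs κo κd c m)) +
        (-((κo - κd) * bbar n p q κs κo κd c (j - 1)) +
          -((κo - κd) * bbar n p q κs κo κd c k)) := by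
    have e1 : ∀ m ∈ Finset.Icc 1 (n - 1),
        ker κs κo κd (j, k) (m + 1, m) * aAt n p q κs κo κd c (m + 1, m) =
        -(κd * bbar n p q κs κo κd c m) +
          (-((κo - κd) * (if j - 1 = m then bbar n p q κs κo κd c m else 0)) +
            -((κo - κd) * (if k = m then bbar n p q κs κo κd c m else 0))) := by
      intro m hm
      rw [Finset.mem_Icc] at hm
      have hmem : (m + 1, m) ∈ T n p q := mem_T_iff.mpr (Or.inr (Or.inl ⟨m, hm, rfl⟩))
      have hne : ((j, k) : ℕ × ℕ) ≠ (m + 1, m) := fun e => hu (e ▸ hmem)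
      rw [haArev m, ker, if_neg hne]
      by_cases h1 : j = m + 1 <;> by_cases h2 : k = m
      · exact absurd (by rw [h1, h2]) hne
      · rw [if_pos (Or.inl h1), if_pos (by omega : j - 1 = m), if_neg h2]; ring
      · rw [if_pos (Or.inr h2), if_neg (by omega : ¬ j - 1 = m), if_pos h2]; ring
      · rw [if_neg (fun hc => hc.elim h1 h2), if_neg (by omega : ¬ j - 1 = m), if_neg h2]; ring
    rw [Finset.sum_congr rfl e1, Finset.sum_add_distrib, Finset.sum_add_distrib,
      Finset.sum_neg_distrib, Finset.sum_neg_distrib, Finset.sum_neg_distrib,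
      ← Finset.mul_sum, ← Finset.mul_sum, ← Finset.mul_sum,
      Finset.sum_ite_eq, Finset.sum_ite_eq, hbif (j - 1), hbif k]
  -- the exception pair contributions
  have hpqT : (p, q) ∈ T n p q := mem_T_iff.mpr (Or.inr (Or.inr (Or.inl rfl)))
  have hqpT : (q, p) ∈ T n p q := mem_T_iff.mpr (Or.inr (Or.inr (Or.inr rfl)))
  have hC1 : ker κs κo κd (j, k) (p, q) * aAt n p q κs κo κd c (p, q) =
      κd * hbar n p q κs κo κd c +
        (κo - κd) * ((if j = p then (1 : ℝ) else 0) + (if k = q then (1 : ℝ) else 0)) *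
          hbar n p q κs κo κd c := by
    have hne : ((j, k) : ℕ × ℕ) ≠ (p, q) := fun e => hu (e ▸ hpqT)
    rw [show aAt n p q κs κo κd c (p, q) = hbar n p q κs κo κd c from rfl]
    rw [ker, if_neg hne]
    by_cases h1 : j = p <;> by_cases h2 : k = q
    · exact absurd (by rw [h1, h2]) hne
    · rw [if_pos (Or.inl h1), if_pos h1, if_neg h2]; ring
    · rw [if_pos (Or.inr h2), if_neg h1, if_pos h2]; ring
    · rw [if_neg (fun hc => hc.elim h1 h2), if_neg h1, if_neg h2]; ring
  have hC2 : ker κs κo κd (j, k) (q, p) * aAt n p q κs κo κd c (q, p) =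
      -(κd * hbar n p q κs κo κd c) -
        (κo - κd) * ((if j = q then (1 : ℝ) else 0) + (if k = p then (1 : ℝ) else 0)) *
          hbar n p q κs κo κd c := by
    have hne : ((j, k) : ℕ × ℕ) ≠ (q, p) := fun e => hu (e ▸ hqpT)
    rw [haQP, ker, if_neg hne]
    by_cases h1 : j = q <;> by_cases h2 : k = p
    · exact absurd (by rw [h1, h2]) hne
    · rw [if_pos (Or.inl h1), if_pos h1, if_neg h2]; ring
    · rw [if_pos (Or.inr h2), if_neg h1, if_pos h2]; ring
    · rw [if_neg (fun hc => hc.elim h1 h2), if_neg h1, if_neg h2]; ring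
  rw [hpred, sum_T n p q hqp hgap, hA, hB, hC1, hC2, rank, rank]
  ring


end TIExc
end
end

section
/- Let m ≥ 1 be an integer and a, b real numbers with b ≠ 0 and a/b < −2, and let B be the m×m matrix with B_{ii} = a, B_{ij} = b when |i−j| = 1, and B_{ij} = 0 otherwise. Then B is invertible and, with λ := arccosh(−a/(2b)), its inverse satisfies B⁻¹_{ij} = −[cosh((m+1−|j−i|)λ) − cosh((m+1−i−j)λ)] / (2b·sinh(λ)·sinh((m+1)λ)) for all 1 ≤ i, j ≤ m. -/
open Real Matrix Finset

noncomputable section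

/-- Real inverse hyperbolic cosine. -/
def arcosh (x : ℝ) : ℝ := Real.log (x + Real.sqrt (x ^ 2 - 1))

private lemma sum_ite_val {α : Type*} [AddCommMonoid α] (m n : ℕ) (x : α) :
    (∑ k : Fin m, if (k : ℕ) = n then x else 0) = if n < m then x else 0 := by
  by_cases h : n < m
  · rw [if_pos h, Finset.sum_eq_single (⟨n, h⟩ : Fin m)]
    · simp
    · intro k _ hk
      rw [if_neg fun he => hk (Fin.ext he)]
    · intro h'; exact absurd (Finset.mem_univ _) h'
  · rw [if_neg h, Finset.sum_eq_zero]
    intro k _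
    refine if_neg fun he => h ?_
    rw [← he]; exact k.isLt

private lemma sum_ite_succ {α : Type*} [AddCommMonoid α] (m n : ℕ) (x : α) :
    (∑ k : Fin m, if (k : ℕ) + 1 = n then x else 0) = if 1 ≤ n ∧ n ≤ m then x else 0 := by
  by_cases h : 1 ≤ n ∧ n ≤ m
  · rw [if_pos h, Finset.sum_eq_single (⟨n - 1, by omega⟩ : Fin m)]
    · rw [if_pos (by simp; omega)]
    · intro k _ hk
      rw [if_neg fun he => hk (Fin.ext (by simp; omega))]
    · intro h'; exact absurd (Finset.mem_univ _) h'
  · rw [if_neg h, Finset.sum_eq_zero]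
    intro k _
    refine if_neg fun he => h ⟨by omega, ?_⟩
    have := k.isLt; omega

/-- the candidate inverse entry (1-based indices `p`, `q`). -/
private noncomputable def cf (b lam s S M : ℝ) (p q : ℕ) : ℝ :=
  -(Real.sinh (((min p q : ℕ) : ℝ) * lam) *
      Real.sinh ((M - ((max p q : ℕ) : ℝ)) * lam)) / (b * s * S)

/-- Hu & O'Connell: closed-form inverse of a symmetric tridiagonal Toeplitz
matrix with diagonal `a` and off-diagonal `b`, when `a/b < −2`. Indices are
1-based in the formula, so `i`, `j` correspond to `(i : ℕ) + 1`, `(j : ℕ) + 1`. -/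
theorem tridiagonal_toeplitz_inverse
    (m : ℕ) (hm : 1 ≤ m) (a b : ℝ) (hb : b ≠ 0) (hab : a / b < -2)
    (B : Matrix (Fin m) (Fin m) ℝ)
    (hB : ∀ i j : Fin m, B i j =
      if i = j then a
      else if (i : ℕ) + 1 = (j : ℕ) ∨ (j : ℕ) + 1 = (i : ℕ) then b
      else 0) :
    IsUnit B ∧
      ∀ i j : Fin m, B⁻¹ i j =
        -((Real.cosh (((m : ℝ) + 1 - |((j : ℝ) + 1) - ((i : ℝ) + 1)|) *
              _root_.arcosh (-(a / (2 * b)))) -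
            Real.cosh (((m : ℝ) + 1 - ((i : ℝ) + 1) - ((j : ℝ) + 1)) *
              _root_.arcosh (-(a / (2 * b))))) /
          (2 * b * Real.sinh (_root_.arcosh (-(a / (2 * b)))) *
            Real.sinh (((m : ℝ) + 1) * _root_.arcosh (-(a / (2 * b)))))) := by
  have hM0 : (0:ℝ) < (m : ℝ) + 1 := by positivity
  set M : ℝ := (m : ℝ) + 1 with hM
  set t : ℝ := -(a / (2 * b)) with htdef
  have ht1 : 1 < t := by
    have h2 : a / (2 * b) = (a / b) / 2 := by rw [div_div, mul_comm 2 b]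
    rw [htdef, h2]; linarith
  set lam : ℝ := _root_.arcosh t with hlam
  have hy1 : 1 < t + Real.sqrt (t ^ 2 - 1) := by
    have := Real.sqrt_nonneg (t ^ 2 - 1); linarith
  have hlam0 : 0 < lam := by
    rw [hlam]; unfold _root_.arcosh; exact Real.log_pos hy1
  have hcosh : Real.cosh lam = t := by
    have hy0 : 0 < t + Real.sqrt (t ^ 2 - 1) := by linarith
    have hd2 : Real.sqrt (t ^ 2 - 1) ^ 2 = t ^ 2 - 1 := Real.sq_sqrt (by nlinarith)
    have hinv : (t + Real.sqrt (t ^ 2 - 1))⁻¹ = t - Real.sqrt (t ^ 2 - 1) :=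
      inv_eq_of_mul_eq_one_right (by nlinarith)
    rw [hlam]; unfold _root_.arcosh
    rw [Real.cosh_eq, Real.exp_log hy0, Real.exp_neg, Real.exp_log hy0, hinv]
    ring
  set s : ℝ := Real.sinh lam with hs
  set S : ℝ := Real.sinh (M * lam) with hS
  have hs0 : 0 < s := by rw [hs]; exact Real.sinh_pos_iff.2 hlam0
  have hS0 : 0 < S := by
    rw [hS]; exact Real.sinh_pos_iff.2 (mul_pos hM0 hlam0)
  have h0 : 2 * b * t + a = 0 := by
    rw [htdef]; field_simp; ring
  have hD : b * s * S ≠ 0 :=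
    mul_ne_zero (mul_ne_zero hb (ne_of_gt hs0)) (ne_of_gt hS0)
  -- three-term recurrence
  have hrec : ∀ x : ℝ,
      b * Real.sinh ((x - 1) * lam) + a * Real.sinh (x * lam)
        + b * Real.sinh ((x + 1) * lam) = 0 := by
    intro x
    rw [show (x - 1) * lam = x * lam - lam by ring,
      show (x + 1) * lam = x * lam + lam by ring, Real.sinh_sub, Real.sinh_add]
    linear_combination 2 * b * Real.sinh (x * lam) * hcosh
      + Real.sinh (x * lam) * h0
  -- diagonal key identity
  have hkey : ∀ x : ℝ,
      b * Real.sinh ((x - 1) * lam) * Real.sinh ((M - x) * lam)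
        + a * Real.sinh (x * lam) * Real.sinh ((M - x) * lam)
        + b * Real.sinh (x * lam) * Real.sinh ((M - (x + 1)) * lam)
        = -(b * s * S) := by
    intro x
    have eS : S = Real.sinh (x * lam) * Real.cosh ((M - x) * lam)
        + Real.cosh (x * lam) * Real.sinh ((M - x) * lam) := by
      rw [hS, show M * lam = x * lam + (M - x) * lam by ring, Real.sinh_add]
    rw [show (x - 1) * lam = x * lam - lam by ring,
      show (M - (x + 1)) * lam = (M - x) * lam - lam by ring,
      Real.sinh_sub, Real.sinh_sub, eS, hs]
    linear_combination Real.sinh (x * lam) * Real.sinh ((M - x) * lam) * h0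
      + 2 * b * Real.sinh (x * lam) * Real.sinh ((M - x) * lam) * hcosh
  set C : Matrix (Fin m) (Fin m) ℝ :=
    Matrix.of (fun i j : Fin m => cf b lam s S M ((i : ℕ) + 1) ((j : ℕ) + 1)) with hC
  have c0 : ∀ q : ℕ, cf b lam s S M 0 q = 0 := by
    intro q
    unfold cf
    rw [show min 0 q = 0 from by omega]
    norm_num
  have cm1 : ∀ q : ℕ, q ≤ m → cf b lam s S M (m + 1) q = 0 := by
    intro q hq
    unfold cf
    rw [show max (m + 1) q = m + 1 from by omega,
      show M - (((m + 1 : ℕ) : ℝ)) = 0 from by rw [hM]; push_cast; ring]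
    norm_num
  have hBC : B * C = 1 := by
    ext i j
    rw [Matrix.mul_apply, Matrix.one_apply]
    have hCk : ∀ k : Fin m, C k j = cf b lam s S M ((k : ℕ) + 1) ((j : ℕ) + 1) := by
      intro k; rw [hC]; rfl
    have hterm : ∀ k : Fin m, B i k * C k j =
        (if (k : ℕ) = (i : ℕ) then a * cf b lam s S M ((i : ℕ) + 1) ((j : ℕ) + 1) else 0)
      + (if (k : ℕ) = (i : ℕ) + 1 then b * cf b lam s S M ((i : ℕ) + 2) ((j : ℕ) + 1) else 0)
      + (if (k : ℕ) + 1 = (i : ℕ) then b * cf b lam s S M (i : ℕ) ((j : ℕ) + 1) else 0) := by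
      intro k
      rw [hB i k, hCk k]
      by_cases h1 : i = k
      · subst h1
        rw [if_pos rfl, if_pos rfl, if_neg (by omega), if_neg (by omega)]
        ring
      · have h1' : (i : ℕ) ≠ (k : ℕ) := fun he => h1 (Fin.ext he)
        rw [if_neg h1]
        by_cases h2 : (i : ℕ) + 1 = (k : ℕ)
        · rw [if_pos (Or.inl h2), if_neg (by omega), if_pos (by omega), if_neg (by omega),
            show (k : ℕ) + 1 = (i : ℕ) + 2 from by omega]
          ring
        · by_cases h3 : (k : ℕ) + 1 = (i : ℕ)
          · rw [if_pos (Or.inr h3), if_neg (by omega), if_neg (by omega), if_pos h3, h3]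
            ring
          · rw [if_neg (by tauto), if_neg (by omega), if_neg (by omega), if_neg h3]
            ring
    rw [Finset.sum_congr rfl (fun k _ => hterm k), Finset.sum_add_distrib,
      Finset.sum_add_distrib, sum_ite_val, sum_ite_val, sum_ite_succ,
      if_pos i.isLt]
    have h2nd : (if (i : ℕ) + 1 < m then
        b * cf b lam s S M ((i : ℕ) + 2) ((j : ℕ) + 1) else 0)
        = b * cf b lam s S M ((i : ℕ) + 2) ((j : ℕ) + 1) := by
      by_cases h : (i : ℕ) + 1 < m
      · rw [if_pos h]
      · have him : (i : ℕ) + 2 = m + 1 := by have := i.isLt; omega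
        rw [if_neg h, him, cm1 _ (by have := j.isLt; omega), mul_zero]
    have h3rd : (if 1 ≤ (i : ℕ) ∧ (i : ℕ) ≤ m then
        b * cf b lam s S M (i : ℕ) ((j : ℕ) + 1) else 0)
        = b * cf b lam s S M (i : ℕ) ((j : ℕ) + 1) := by
      by_cases h : 1 ≤ (i : ℕ)
      · rw [if_pos ⟨h, le_of_lt i.isLt⟩]
      · have hi0 : (i : ℕ) = 0 := by omega
        rw [if_neg (by omega), hi0, c0, mul_zero]
    rw [h2nd, h3rd]
    rcases Nat.lt_trichotomy (i : ℕ) (j : ℕ) with hij | hij | hij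
    · -- i < j : strictly above diagonal
      rw [if_neg (fun he => by rw [he] at hij; omega)]
      have h := hrec (((i : ℕ) : ℝ) + 1)
      rw [show ((i : ℕ) : ℝ) + 1 - 1 = ((i : ℕ) : ℝ) from by ring,
        show ((i : ℕ) : ℝ) + 1 + 1 = ((i : ℕ) : ℝ) + 2 from by ring] at h
      unfold cf
      rw [show min ((i : ℕ) + 1) ((j : ℕ) + 1) = (i : ℕ) + 1 from by omega,
        show max ((i : ℕ) + 1) ((j : ℕ) + 1) = (j : ℕ) + 1 from by omega,
        show min ((i : ℕ) + 2) ((j : ℕ) + 1) = (i : ℕ) + 2 from by omega,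
        show max ((i : ℕ) + 2) ((j : ℕ) + 1) = (j : ℕ) + 1 from by omega,
        show min (i : ℕ) ((j : ℕ) + 1) = (i : ℕ) from by omega,
        show max (i : ℕ) ((j : ℕ) + 1) = (j : ℕ) + 1 from by omega]
      push_cast
      linear_combination
        (-(Real.sinh ((M - (((j : ℕ) : ℝ) + 1)) * lam)) / (b * s * S)) * h
    · -- i = j : diagonal
      have hieq : i = j := Fin.ext hij
      subst hieq
      rw [if_pos rfl]
      have h := hkey (((i : ℕ) : ℝ) + 1)
      rw [show ((i : ℕ) : ℝ) + 1 - 1 = ((i : ℕ) : ℝ) from by ring,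
        show M - (((i : ℕ) : ℝ) + 1 + 1) = M - (((i : ℕ) : ℝ) + 2) from by ring] at h
      have hgoal :
          a * cf b lam s S M ((i : ℕ) + 1) ((i : ℕ) + 1)
            + b * cf b lam s S M ((i : ℕ) + 2) ((i : ℕ) + 1)
            + b * cf b lam s S M (i : ℕ) ((i : ℕ) + 1)
          = -(-(b * s * S)) / (b * s * S) := by
        unfold cf
        rw [show min ((i : ℕ) + 1) ((i : ℕ) + 1) = (i : ℕ) + 1 from by omega,
          show max ((i : ℕ) + 1) ((i : ℕ) + 1) = (i : ℕ) + 1 from by omega,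
          show min ((i : ℕ) + 2) ((i : ℕ) + 1) = (i : ℕ) + 1 from by omega,
          show max ((i : ℕ) + 2) ((i : ℕ) + 1) = (i : ℕ) + 2 from by omega,
          show min (i : ℕ) ((i : ℕ) + 1) = (i : ℕ) from by omega,
          show max (i : ℕ) ((i : ℕ) + 1) = (i : ℕ) + 1 from by omega]
        push_cast
        linear_combination (-(1 : ℝ) / (b * s * S)) * h
      rw [hgoal, neg_neg, div_self hD]
    · -- j < i : strictly below diagonal
      rw [if_neg (fun he => by rw [he] at hij; omega)]
      have h := hrec (M - (((i : ℕ) : ℝ) + 1))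
      rw [show M - (((i : ℕ) : ℝ) + 1) - 1 = M - (((i : ℕ) : ℝ) + 2) from by ring,
        show M - (((i : ℕ) : ℝ) + 1) + 1 = M - ((i : ℕ) : ℝ) from by ring] at h
      unfold cf
      rw [show min ((i : ℕ) + 1) ((j : ℕ) + 1) = (j : ℕ) + 1 from by omega,
        show max ((i : ℕ) + 1) ((j : ℕ) + 1) = (i : ℕ) + 1 from by omega,
        show min ((i : ℕ) + 2) ((j : ℕ) + 1) = (j : ℕ) + 1 from by omega,
        show max ((i : ℕ) + 2) ((j : ℕ) + 1) = (i : ℕ) + 2 from by omega,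
        show min (i : ℕ) ((j : ℕ) + 1) = (j : ℕ) + 1 from by omega,
        show max (i : ℕ) ((j : ℕ) + 1) = (i : ℕ) from by omega]
      push_cast
      linear_combination
        (-(Real.sinh ((((j : ℕ) : ℝ) + 1) * lam)) / (b * s * S)) * h
  have hUnit : IsUnit B :=
    (Matrix.isUnit_iff_isUnit_det B).2 (Matrix.isUnit_det_of_right_inverse hBC)
  have hinv : B⁻¹ = C := Matrix.inv_eq_right_inv hBC
  refine ⟨hUnit, fun i j => ?_⟩
  rw [hinv, hC]
  show cf b lam s S M ((i : ℕ) + 1) ((j : ℕ) + 1) = _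
  unfold cf
  rcases le_or_gt (i : ℕ) (j : ℕ) with hij | hij
  · have habs : |((j : ℝ) + 1) - ((i : ℝ) + 1)| = (j : ℝ) - (i : ℝ) := by
      rw [abs_of_nonneg (by
        have : ((i : ℕ) : ℝ) ≤ ((j : ℕ) : ℝ) := Nat.cast_le.2 hij
        push_cast at this ⊢
        linarith)]
      ring
    rw [show min ((i : ℕ) + 1) ((j : ℕ) + 1) = (i : ℕ) + 1 from by omega,
      show max ((i : ℕ) + 1) ((j : ℕ) + 1) = (j : ℕ) + 1 from by omega,
      habs,
      show (M - ((j : ℝ) - (i : ℝ))) * lam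
        = ((i : ℝ) + 1) * lam + (M - ((j : ℝ) + 1)) * lam from by ring,
      show (M - ((i : ℝ) + 1) - ((j : ℝ) + 1)) * lam
        = (M - ((j : ℝ) + 1)) * lam - ((i : ℝ) + 1) * lam from by ring,
      Real.cosh_add, Real.cosh_sub]
    push_cast
    field_simp
    ring
  · have habs : |((j : ℝ) + 1) - ((i : ℝ) + 1)| = (i : ℝ) - (j : ℝ) := by
      rw [abs_of_nonpos (by
        have : ((j : ℕ) : ℝ) ≤ ((i : ℕ) : ℝ) := Nat.cast_le.2 (le_of_lt hij)
        push_cast at this ⊢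
        linarith)]
      ring
    rw [show min ((i : ℕ) + 1) ((j : ℕ) + 1) = (j : ℕ) + 1 from by omega,
      show max ((i : ℕ) + 1) ((j : ℕ) + 1) = (i : ℕ) + 1 from by omega,
      habs,
      show (M - ((i : ℝ) - (j : ℝ))) * lam
        = ((j : ℝ) + 1) * lam + (M - ((i : ℝ) + 1)) * lam from by ring,
      show (M - ((i : ℝ) + 1) - ((j : ℝ) + 1)) * lam
        = (M - ((i : ℝ) + 1)) * lam - ((j : ℝ) + 1) * lam from by ring,
      Real.cosh_add, Real.cosh_sub]
    push_cast
    field_simp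
    ring
end
end
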